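/- For generic parameters (R_0 ≠ 1 and M_{jk} ≠ 1 for all j ≠ k), for every subset R of the stages {0, ..., n-1} there is exactly one fixed point (S*, T*) whose set of regulated stages equals R; hence the system has exactly 2^n fixed points. -/

import Mathlib

/-- Follow-on factor `M_j = r_j f_j / (a_{j+1} + f_{j+1})`. -/
noncomputable def Mfac {n : ℕ} (r f a : ZMod n → ℝ) (j : ZMod n) : ℝ :=
  r j * f j / (a (j + 1) + f (j + 1))

/-- Cyclic product `M_{jk} = ∏_{ℓ ∈ [j,k)} M_ℓ` (with `M_{jj} = 1`). -/
noncomputable def cycProd {n : ℕ} (M : ZMod n → ℝ) (j k : ZMod n) : ℝ :=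
  ∏ i ∈ Finset.range ((k - j).val), M (j + (i : ZMod n))

section Aux

variable {n : ℕ} [NeZero n]

open Classical in
/-- Distance back (in steps) from `j` to the nearest element of `R`. -/
noncomputable def distF (R : Finset (ZMod n)) (j : ZMod n) : ℕ :=
  if h : ∃ d : ℕ, j - (d : ZMod n) ∈ R then Nat.find h else 0

lemma exists_sub_mem {R : Finset (ZMod n)} (hR : R.Nonempty) (j : ZMod n) :
    ∃ d : ℕ, j - (d : ZMod n) ∈ R := by
  obtain ⟨k, hk⟩ := hR
  exact ⟨(j - k).val, by rw [ZMod.natCast_rightInverse (j - k)]; simpa using hk⟩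

lemma distF_mem {R : Finset (ZMod n)} (hR : R.Nonempty) (j : ZMod n) :
    j - (distF R j : ZMod n) ∈ R := by
  rw [distF, dif_pos (exists_sub_mem hR j)]
  exact Nat.find_spec (exists_sub_mem hR j)

lemma distF_le {R : Finset (ZMod n)} {j : ZMod n} {d : ℕ} (hd : j - (d : ZMod n) ∈ R) :
    distF R j ≤ d := by
  rw [distF, dif_pos ⟨d, hd⟩]
  exact Nat.find_le hd

lemma distF_lt {R : Finset (ZMod n)} (hR : R.Nonempty) (j : ZMod n) : distF R j < n := by
  obtain ⟨k, hk⟩ := hR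
  have h1 : distF R j ≤ (j - k).val :=
    distF_le (by rw [ZMod.natCast_rightInverse (j - k)]; simpa using hk)
  exact lt_of_le_of_lt h1 (ZMod.val_lt _)

lemma distF_eq_zero_iff {R : Finset (ZMod n)} (hR : R.Nonempty) {j : ZMod n} :
    distF R j = 0 ↔ j ∈ R := by
  constructor
  · intro h
    have h2 := distF_mem hR j
    rw [h] at h2
    simpa using h2
  · intro h
    exact Nat.le_zero.mp (distF_le (by simpa using h))

lemma distF_succ {R : Finset (ZMod n)} (hR : R.Nonempty) {j : ZMod n} (hj : j ∉ R) :
    distF R j = distF R (j - 1) + 1 := by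
  have h0 : distF R j ≠ 0 := fun h => hj ((distF_eq_zero_iff hR).mp h)
  have h1 : 1 ≤ distF R j := Nat.one_le_iff_ne_zero.mpr h0
  have hle : distF R (j - 1) ≤ distF R j - 1 := by
    apply distF_le
    have hc : ((distF R j - 1 : ℕ) : ZMod n) = (distF R j : ZMod n) - 1 := by
      rw [Nat.cast_sub h1, Nat.cast_one]
    rw [hc]
    have he : j - 1 - ((distF R j : ZMod n) - 1) = j - (distF R j : ZMod n) := by ring
    rw [he]
    exact distF_mem hR j
  have hge : distF R j ≤ distF R (j - 1) + 1 := by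
    apply distF_le
    have hc : ((distF R (j - 1) + 1 : ℕ) : ZMod n)
        = (distF R (j - 1) : ZMod n) + 1 := by push_cast; ring
    rw [hc]
    have he : j - ((distF R (j - 1) : ZMod n) + 1) = j - 1 - (distF R (j - 1) : ZMod n) := by
      ring
    rw [he]
    exact distF_mem hR (j - 1)
  omega

/-- Candidate `S` values. -/
noncomputable def Sfun (M : ZMod n → ℝ) (R : Finset (ZMod n)) (b : ℝ) (j : ZMod n) : ℝ :=
  b * ∏ i ∈ Finset.range (distF R j), M (j - 1 - (i : ZMod n))

/-- Candidate `T` values. -/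
noncomputable def Tfun (r f a : ZMod n → ℝ) (R : Finset (ZMod n)) (b : ℝ) (j : ZMod n) : ℝ :=
  if j ∈ R then r (j-1) * f (j-1) * Sfun (Mfac r f a) R b (j-1) / b - (a j + f j) else 0

lemma Sfun_mem {M : ZMod n → ℝ} {R : Finset (ZMod n)} {b : ℝ} (hR : R.Nonempty)
    {j : ZMod n} (hj : j ∈ R) : Sfun M R b j = b := by
  rw [Sfun, (distF_eq_zero_iff hR).mpr hj]
  simp

lemma Sfun_step {M : ZMod n → ℝ} {R : Finset (ZMod n)} {b : ℝ} (hR : R.Nonempty)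
    {j : ZMod n} (hj : j ∉ R) : Sfun M R b j = M (j - 1) * Sfun M R b (j - 1) := by
  rw [Sfun, Sfun, distF_succ hR hj, Finset.prod_range_succ']
  rw [Finset.prod_congr rfl (fun i _ => ?_)]
  · simp only [Nat.cast_zero, sub_zero]
    ring
  · show M (j - 1 - ((i + 1 : ℕ) : ZMod n)) = M (j - 1 - 1 - (i : ZMod n))
    congr 1
    push_cast
    ring

lemma prod_shift (M : ZMod n → ℝ) (c : ZMod n) :
    ∏ i ∈ Finset.range n, M (c - (i : ZMod n)) = ∏ x : ZMod n, M x := by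
  apply Finset.prod_nbij' (fun (i : ℕ) => c - (i : ZMod n)) (fun x => (c - x).val)
  · intro i _; exact Finset.mem_univ _
  · intro x _; exact Finset.mem_range.mpr (ZMod.val_lt _)
  · intro i hi
    rw [sub_sub_cancel]
    exact ZMod.val_cast_of_lt (Finset.mem_range.mp hi)
  · intro x _
    rw [ZMod.natCast_rightInverse (c - x), sub_sub_cancel]
  · intro i _; rfl

lemma Tfun_ne {r f a : ZMod n → ℝ} {R : Finset (ZMod n)} {b : ℝ} (hb : b ≠ 0)
    (haf : ∀ j, 0 < a j + f j)
    (hgen1 : (∏ j : ZMod n, Mfac r f a j) ≠ 1)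
    (hgen2 : ∀ j k : ZMod n, j ≠ k → cycProd (Mfac r f a) j k ≠ 1)
    (hR : R.Nonempty) {j : ZMod n} (hj : j ∈ R) :
    Tfun r f a R b j ≠ 0 := by
  have hDlt : distF R (j - 1) < n := distF_lt hR _
  set M : ZMod n → ℝ := Mfac r f a with hM
  set D' : ℕ := distF R (j - 1) with hD'
  set Q : ℝ := ∏ i ∈ Finset.range (D' + 1), M (j - 1 - (i : ZMod n)) with hQ
  have hrf : r (j - 1) * f (j - 1) = M (j - 1) * (a j + f j) := by
    rw [hM, Mfac, sub_add_cancel]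
    exact (div_mul_cancel₀ _ (ne_of_gt (haf j))).symm
  have hQsplit : Q = M (j - 1) * ∏ i ∈ Finset.range D', M (j - 1 - 1 - (i : ZMod n)) := by
    rw [hQ, Finset.prod_range_succ']
    rw [Finset.prod_congr rfl (fun i _ => ?_)]
    · simp only [Nat.cast_zero, sub_zero]
      ring
    · show M (j - 1 - ((i + 1 : ℕ) : ZMod n)) = M (j - 1 - 1 - (i : ZMod n))
      congr 1
      push_cast
      ring
  have hT : Tfun r f a R b j = (a j + f j) * (Q - 1) := by
    rw [Tfun, if_pos hj, Sfun, ← hM, ← hD', hrf, hQsplit]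
    field_simp [hb]
  rw [hT]
  have hQne : Q ≠ 1 := by
    rcases eq_or_lt_of_le (Nat.succ_le_of_lt hDlt) with h | h
    · have h' : D' + 1 = n := h
      rw [hQ, h', prod_shift M (j - 1)]
      exact hgen1
    · set k : ZMod n := j - ((D' + 1 : ℕ) : ZMod n) with hk
      have hkj : k ≠ j := by
        intro hkk
        rw [hk] at hkk
        have h0 : ((D' + 1 : ℕ) : ZMod n) = 0 := sub_eq_self.mp hkk
        have hdvd : n ∣ D' + 1 := (ZMod.natCast_eq_zero_iff _ n).mp h0
        have := Nat.le_of_dvd (by omega) hdvd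
        omega
      have hval : (j - k).val = D' + 1 := by
        rw [hk, sub_sub_cancel, ZMod.val_cast_of_lt h]
      have hcyc : cycProd M k j = Q := by
        rw [cycProd, hval, hQ, ← Finset.prod_range_reflect]
        apply Finset.prod_congr rfl
        intro i hi
        have hi' : i ≤ D' := Nat.lt_succ_iff.mp (Finset.mem_range.mp hi)
        congr 1
        simp only [Nat.add_sub_cancel]
        rw [Nat.cast_sub hi', hk]
        push_cast
        ring
      rw [← hcyc]
      exact hgen2 k j hkj
  exact mul_ne_zero (ne_of_gt (haf j)) (sub_ne_zero.mpr hQne)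

end Aux

/-- For generic parameters, each subset R of stages is the regulated set of exactly
one fixed point; hence there are exactly 2^n fixed points. -/
theorem stmt6 (n : ℕ) [NeZero n] (hn : 1 < n)
    (r f a : ZMod n → ℝ) (b : ℝ)
    (hr : ∀ j, 0 < r j) (hf : ∀ j, 0 < f j) (hb : 0 < b)
    (haf : ∀ j, 0 < a j + f j)
    (hgen1 : (∏ j : ZMod n, Mfac r f a j) ≠ 1)
    (hgen2 : ∀ j k : ZMod n, j ≠ k → cycProd (Mfac r f a) j k ≠ 1) :
    (∀ R : Finset (ZMod n),
      ∃! p : (ZMod n → ℝ) × (ZMod n → ℝ),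
        (∀ j, r (j - 1) * f (j - 1) * p.1 (j - 1) = p.1 j * (a j + f j + p.2 j)) ∧
        (∀ j, (p.1 j - b) * p.2 j = 0) ∧
        (∀ j, p.2 j ≠ 0 ↔ j ∈ R)) ∧
    Set.ncard {p : (ZMod n → ℝ) × (ZMod n → ℝ) |
        (∀ j, r (j - 1) * f (j - 1) * p.1 (j - 1) = p.1 j * (a j + f j + p.2 j)) ∧
        (∀ j, (p.1 j - b) * p.2 j = 0)} = 2 ^ n := by
  classical
  have hbne : b ≠ 0 := ne_of_gt hb
  have hafne : ∀ j : ZMod n, a j + f j ≠ 0 := fun j => ne_of_gt (haf j)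
  have part1 : ∀ R : Finset (ZMod n),
      ∃! p : (ZMod n → ℝ) × (ZMod n → ℝ),
        (∀ j, r (j - 1) * f (j - 1) * p.1 (j - 1) = p.1 j * (a j + f j + p.2 j)) ∧
        (∀ j, (p.1 j - b) * p.2 j = 0) ∧
        (∀ j, p.2 j ≠ 0 ↔ j ∈ R) := by
    intro R
    rcases R.eq_empty_or_nonempty with hRe | hR
    · -- R = ∅ : the unique fixed point is the origin
      subst hRe
      refine ⟨(0, 0), ⟨?_, ?_, ?_⟩, ?_⟩
      · intro j; simp
      · intro j; simp
      · intro j; simp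
      · rintro p ⟨h1, h2, h3⟩
        have hT0 : ∀ j, p.2 j = 0 := by
          intro j
          by_contra h
          simpa using (h3 j).mp h
        have step : ∀ j : ZMod n, p.1 j = Mfac r f a (j - 1) * p.1 (j - 1) := by
          intro j
          have e := h1 j
          rw [hT0 j, add_zero] at e
          rw [Mfac, sub_add_cancel]
          field_simp [hafne j]
          linear_combination -e
        have iter : ∀ d : ℕ, ∀ j : ZMod n,
            p.1 j = (∏ i ∈ Finset.range d, Mfac r f a (j - 1 - (i : ZMod n)))
              * p.1 (j - (d : ZMod n)) := by
          intro d
          induction d with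
          | zero => intro j; simp
          | succ d ih =>
            intro j
            rw [Finset.prod_range_succ]
            have e1 := ih j
            have e2 := step (j - (d : ZMod n))
            have hc : j - ((d + 1 : ℕ) : ZMod n) = j - (d : ZMod n) - 1 := by
              push_cast; ring
            have hc2 : j - 1 - (d : ZMod n) = j - (d : ZMod n) - 1 := by ring
            rw [hc, hc2]
            rw [e1, e2]
            ring
        have hS0 : ∀ j, p.1 j = 0 := by
          intro j
          have e := iter n j
          rw [ZMod.natCast_self, sub_zero, prod_shift (Mfac r f a) (j - 1)] at e
          have e2 : p.1 j * ((∏ x : ZMod n, Mfac r f a x) - 1) = 0 := by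
            linear_combination -e
          rcases mul_eq_zero.mp e2 with h | h
          · exact h
          · exact absurd (sub_eq_zero.mp h) hgen1
        have : p = ((0, 0) : (ZMod n → ℝ) × (ZMod n → ℝ)) := by
          rw [Prod.ext_iff]
          constructor
          · funext j; exact hS0 j
          · funext j; exact hT0 j
        exact this
    · -- R nonempty
      set M : ZMod n → ℝ := Mfac r f a with hM
      refine ⟨(Sfun M R b, Tfun r f a R b), ⟨?_, ?_, ?_⟩, ?_⟩
      · intro j
        by_cases hjR : j ∈ R
        · show r (j-1) * f (j-1) * Sfun M R b (j-1)
            = Sfun M R b j * (a j + f j + Tfun r f a R b j)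
          rw [Sfun_mem hR hjR, Tfun, if_pos hjR, ← hM]
          field_simp [hbne]
          ring
        · show r (j-1) * f (j-1) * Sfun M R b (j-1)
            = Sfun M R b j * (a j + f j + Tfun r f a R b j)
          rw [Tfun, if_neg hjR, add_zero, Sfun_step hR hjR, hM, Mfac, sub_add_cancel]
          field_simp [hafne j]
      · intro j
        by_cases hjR : j ∈ R
        · show (Sfun M R b j - b) * Tfun r f a R b j = 0
          rw [Sfun_mem hR hjR]
          ring
        · show (Sfun M R b j - b) * Tfun r f a R b j = 0
          rw [Tfun, if_neg hjR, mul_zero]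
      · intro j
        constructor
        · intro h
          by_contra hjR
          exact h (by simp only [Tfun, if_neg hjR])
        · intro hjR
          exact Tfun_ne hbne haf hgen1 hgen2 hR hjR
      · rintro p ⟨h1, h2, h3⟩
        have hSd : ∀ d : ℕ, ∀ j : ZMod n, distF R j = d → p.1 j = Sfun M R b j := by
          intro d
          induction d with
          | zero =>
            intro j hdj
            have hjR : j ∈ R := (distF_eq_zero_iff hR).mp hdj
            have hT : p.2 j ≠ 0 := (h3 j).mpr hjR
            have hSb : p.1 j = b := by
              rcases mul_eq_zero.mp (h2 j) with h | h
              · linarith [sub_eq_zero.mp h]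
              · exact absurd h hT
            rw [hSb, Sfun_mem hR hjR]
          | succ d ih =>
            intro j hdj
            have hjR : j ∉ R := by
              intro hmem
              rw [(distF_eq_zero_iff hR).mpr hmem] at hdj
              omega
            have hT0 : p.2 j = 0 := by
              by_contra h
              exact hjR ((h3 j).mp h)
            have hd' : distF R (j - 1) = d := by
              have := distF_succ hR hjR
              omega
            have hprev := ih (j - 1) hd'
            have e := h1 j
            rw [hT0, add_zero] at e
            rw [Sfun_step hR hjR, ← hprev, hM, Mfac, sub_add_cancel]
            field_simp [hafne j]
            linear_combination -e
        have hSfull : p.1 = Sfun M R b := funext fun j => hSd (distF R j) j rfl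
        have hTfull : p.2 = Tfun r f a R b := by
          funext j
          by_cases hjR : j ∈ R
          · have hb1 : p.1 j = b := by rw [hSfull]; exact Sfun_mem hR hjR
            have e := h1 j
            rw [hb1, hSfull] at e
            rw [Tfun, if_pos hjR, ← hM, eq_sub_iff_add_eq, eq_div_iff hbne]
            linear_combination -e
          · have hT0 : p.2 j = 0 := by
              by_contra h
              exact hjR ((h3 j).mp h)
            rw [hT0, Tfun, if_neg hjR]
        rw [Prod.ext_iff]
        exact ⟨hSfull, hTfull⟩
  refine ⟨part1, ?_⟩
  choose Φ hΦ huniq using part1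
  have hset : {p : (ZMod n → ℝ) × (ZMod n → ℝ) |
        (∀ j, r (j - 1) * f (j - 1) * p.1 (j - 1) = p.1 j * (a j + f j + p.2 j)) ∧
        (∀ j, (p.1 j - b) * p.2 j = 0)} = Set.range Φ := by
    ext p
    simp only [Set.mem_setOf_eq, Set.mem_range]
    constructor
    · rintro ⟨hp1, hp2⟩
      exact ⟨Finset.univ.filter (fun j => p.2 j ≠ 0),
        (huniq _ p ⟨hp1, hp2, fun j => by simp⟩).symm⟩
    · rintro ⟨R, rfl⟩
      exact ⟨(hΦ R).1, (hΦ R).2.1⟩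
  have hinj : Function.Injective Φ := by
    intro R1 R2 hEq
    ext j
    have c1 := (hΦ R1).2.2 j
    have c2 := (hΦ R2).2.2 j
    rw [hEq] at c1
    exact c1.symm.trans c2
  rw [hset]
  calc (Set.range Φ).ncard = Nat.card (Set.range Φ) := rfl
    _ = Nat.card (Finset (ZMod n)) := Nat.card_range_of_injective hinj
    _ = 2 ^ n := by simp [Nat.card_eq_fintype_card, ZMod.card]
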